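/- For any connected graph G of order n ≥ 2 and any positive integers r and s, dim_l(G ⊙ K_{r,s}) = n. -/

import Mathlib

open SimpleGraph

/-- A set `S` is a local metric generator for `G` if every pair of adjacent
vertices is distinguished (by distance) by some element of `S`. -/
def IsLocalMetricGenerator {α : Type*} (G : SimpleGraph α) (S : Set α) : Prop :=
  ∀ x y : α, G.Adj x y → ∃ v ∈ S, G.dist v x ≠ G.dist v y

/-- The local metric dimension of a graph. -/
noncomputable def localMetricDim {α : Type*} (G : SimpleGraph α) : ℕ :=
  sInf {k | ∃ S : Finset α, S.card = k ∧ IsLocalMetricGenerator G ↑S}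

/-- A local metric basis: a minimum-cardinality local metric generator. -/
def IsLocalMetricBasis {α : Type*} (G : SimpleGraph α) (S : Finset α) : Prop :=
  IsLocalMetricGenerator G ↑S ∧ S.card = localMetricDim G

/-- The corona product `G ⊙ H`. -/
def corona {α β : Type*} (G : SimpleGraph α) (H : SimpleGraph β) :
    SimpleGraph (α ⊕ α × β) :=
  SimpleGraph.fromRel (fun x y => match x, y with
    | Sum.inl a, Sum.inl a' => G.Adj a a'
    | Sum.inl a, Sum.inr p => a = p.1
    | Sum.inr p, Sum.inl a => a = p.1
    | Sum.inr p, Sum.inr q => p.1 = q.1 ∧ H.Adj p.2 q.2)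

/-- The join `K₁ + H`; the vertex of `K₁` is `none`. -/
def joinK1 {β : Type*} (H : SimpleGraph β) : SimpleGraph (Option β) :=
  SimpleGraph.fromRel (fun x y => match x, y with
    | none, some _ => True
    | some b, some b' => H.Adj b b'
    | _, _ => False)

/-- Eccentricity of a vertex (in `ℕ∞`). -/
noncomputable def ecc {α : Type*} (G : SimpleGraph α) (x : α) : ℕ∞ :=
  ⨆ y, G.edist x y

/-- Radius of a graph (in `ℕ∞`). -/
noncomputable def gradius {α : Type*} (G : SimpleGraph α) : ℕ∞ :=
  ⨅ x, ecc G x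

/-- Diameter of a graph (in `ℕ∞`). -/
noncomputable def gdiam {α : Type*} (G : SimpleGraph α) : ℕ∞ :=
  ⨆ x, ecc G x

section CoronaLemmas

variable {α β : Type*} {G : SimpleGraph α} {H : SimpleGraph β}

lemma corona_adj_inl_inl {a b : α} :
    (corona G H).Adj (Sum.inl a) (Sum.inl b) ↔ G.Adj a b := by
  simp only [corona, SimpleGraph.fromRel_adj, ne_eq, Sum.inl.injEq]
  constructor
  · rintro ⟨hne, h | h⟩
    · exact h
    · exact h.symm
  · intro h
    exact ⟨h.ne, Or.inl h⟩

lemma corona_adj_inl_inr {a b : α} {q : β} :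
    (corona G H).Adj (Sum.inl a) (Sum.inr (b, q)) ↔ a = b := by
  simp only [corona, SimpleGraph.fromRel_adj, ne_eq]
  constructor
  · rintro ⟨hne, h | h⟩ <;> exact h
  · intro h
    exact ⟨by simp, Or.inl h⟩

lemma corona_adj_inr_inr {a b : α} {p q : β} :
    (corona G H).Adj (Sum.inr (a, p)) (Sum.inr (b, q)) ↔ a = b ∧ H.Adj p q := by
  simp only [corona, SimpleGraph.fromRel_adj, ne_eq, Sum.inr.injEq, Prod.mk.injEq]
  constructor
  · rintro ⟨hne, ⟨h1, h2⟩ | ⟨h1, h2⟩⟩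
    · exact ⟨h1, h2⟩
    · exact ⟨h1.symm, h2.symm⟩
  · rintro ⟨h1, h2⟩
    refine ⟨?_, Or.inl ⟨h1, h2⟩⟩
    rintro ⟨rfl, rfl⟩
    exact H.irrefl h2

/-- Any vertex adjacent to a vertex of the copy of `H` attached at `a` is either
`inl a` or another vertex of that copy. -/
lemma corona_adj_inr_cases {a : α} {p : β} {x : α ⊕ α × β}
    (h : (corona G H).Adj x (Sum.inr (a, p))) :
    x = Sum.inl a ∨ ∃ p' : β, x = Sum.inr (a, p') := by
  rcases x with b | ⟨b, p'⟩
  · left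
    rw [corona_adj_inl_inr] at h
    rw [h]
  · right
    rw [corona_adj_inr_inr] at h
    exact ⟨p', by rw [h.1]⟩

/-- Every walk from outside the copy of `H` attached at `a` into that copy must
pass through `inl a`. -/
lemma corona_inl_mem_support {a : α} :
    ∀ {x y : α ⊕ α × β} (w : (corona G H).Walk x y),
      (∃ p : β, y = Sum.inr (a, p)) → (∀ p : β, x ≠ Sum.inr (a, p)) →
      Sum.inl a ∈ w.support := by
  intro x y w
  induction w with
  | nil =>
    rintro ⟨p, rfl⟩ hx
    exact absurd rfl (hx p)
  | @cons u v y h w ih =>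
    rintro hy hx
    by_cases hu : u = Sum.inl a
    · rw [SimpleGraph.Walk.support_cons]
      exact hu ▸ List.mem_cons_self
    by_cases hv : ∃ p : β, v = Sum.inr (a, p)
    · obtain ⟨p, rfl⟩ := hv
      rcases corona_adj_inr_cases h with h' | ⟨p', h'⟩
      · exact absurd h' hu
      · exact absurd h' (hx p')
    · push_neg at hv
      rw [SimpleGraph.Walk.support_cons]
      exact List.mem_cons_of_mem _ (ih hy hv)

/-- The natural embedding of `G` into the corona. -/
def coronaInlHom (G : SimpleGraph α) (H : SimpleGraph β) : G →g corona G H where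
  toFun := Sum.inl
  map_rel' := fun h => corona_adj_inl_inl.mpr h

lemma corona_connected [Nonempty α] (hG : G.Connected) : (corona G H).Connected := by
  rw [SimpleGraph.connected_iff]
  constructor
  · intro x y
    have key : ∀ z : α ⊕ α × β, ∃ a, (corona G H).Reachable z (Sum.inl a) := by
      rintro (a | ⟨a, q⟩)
      · exact ⟨a, SimpleGraph.Reachable.refl _⟩
      · exact ⟨a, ((corona_adj_inl_inr (q := q)).mpr rfl).symm.reachable⟩
    obtain ⟨a, hx⟩ := key x
    obtain ⟨b, hy⟩ := key y
    exact hx.trans (((hG.preconnected a b).map (coronaInlHom G H)).trans hy.symm)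
  · exact ⟨Sum.inl Classical.ofNonempty⟩

/-- The distance from a vertex outside the closed copy at `a` to a vertex of the
copy at `a` is one more than its distance to `inl a`. -/
lemma corona_dist_inr [Nonempty α] (hG : G.Connected) {a : α} {q : β}
    {x : α ⊕ α × β} (hx : ∀ p : β, x ≠ Sum.inr (a, p)) :
    (corona G H).dist x (Sum.inr (a, q)) = (corona G H).dist x (Sum.inl a) + 1 := by
  classical
  have hC : (corona G H).Connected := corona_connected hG
  have hadj : (corona G H).Adj (Sum.inl a) (Sum.inr (a, q)) := corona_adj_inl_inr.mpr rfl
  apply le_antisymm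
  · obtain ⟨w, hw⟩ := hC.exists_walk_length_eq_dist x (Sum.inl a)
    calc (corona G H).dist x (Sum.inr (a, q)) ≤ (w.concat hadj).length :=
          SimpleGraph.dist_le _
      _ = w.length + 1 := SimpleGraph.Walk.length_concat _ _
      _ = (corona G H).dist x (Sum.inl a) + 1 := by rw [hw]
  · obtain ⟨w, hw⟩ := hC.exists_walk_length_eq_dist x (Sum.inr (a, q))
    have hmem : Sum.inl a ∈ w.support := corona_inl_mem_support w ⟨q, rfl⟩ hx
    have hsplit : (w.takeUntil _ hmem).length + (w.dropUntil _ hmem).length = w.length := by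
      conv_rhs => rw [← SimpleGraph.Walk.take_spec w hmem]
      rw [SimpleGraph.Walk.length_append]
    have h1 : (corona G H).dist x (Sum.inl a) ≤ (w.takeUntil _ hmem).length :=
      SimpleGraph.dist_le _
    have h2 : 1 ≤ (w.dropUntil _ hmem).length := by
      by_contra h
      have hz : (w.dropUntil _ hmem).length = 0 := by omega
      exact Sum.inl_ne_inr (SimpleGraph.Walk.eq_of_length_eq_zero hz)
    omega

end CoronaLemmas

/-- For connected `G` of order `n ≥ 2` and positive `r`, `s`,
`dim_l (G ⊙ K_{r,s}) = n`. -/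
theorem stmt7 {α : Type*} [Fintype α] (G : SimpleGraph α) (hG : G.Connected)
    (hn : 2 ≤ Fintype.card α) (r s : ℕ) (hr : 1 ≤ r) (hs : 1 ≤ s) :
    localMetricDim (corona G (completeBipartiteGraph (Fin r) (Fin s))) = Fintype.card α := by
  classical
  have : Nonempty α := Fintype.card_pos_iff.mp (by omega)
  set β := (Fin r ⊕ Fin s)
  set H := completeBipartiteGraph (Fin r) (Fin s) with hH
  set C := corona G H with hCdef
  have hC : C.Connected := corona_connected hG
  set i0 : Fin r := ⟨0, hr⟩
  set j0 : Fin s := ⟨0, hs⟩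
  -- not-adjacent distinct vertices have distance ≠ 1
  have dist_ne_one : ∀ x y : α ⊕ α × β, ¬ C.Adj x y → C.dist x y ≠ 1 := by
    intro x y hna h
    exact hna (SimpleGraph.dist_eq_one_iff_adj.mp h)
  -- the candidate generator
  set f : α → α ⊕ α × β := fun a => Sum.inr (a, Sum.inl i0) with hf
  have hfinj : Function.Injective f := by
    intro a b h
    simpa [hf] using h
  set S : Finset (α ⊕ α × β) := Finset.univ.image f with hS
  have hScard : S.card = Fintype.card α := by
    rw [hS, Finset.card_image_of_injective _ hfinj, Finset.card_univ]
  have hfS : ∀ a : α, f a ∈ (S : Set (α ⊕ α × β)) := by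
    intro a
    simp [hS]
  -- Case: the two ends of a G-edge
  have case_inl : ∀ a b : α, G.Adj a b → ∃ v ∈ (S : Set (α ⊕ α × β)),
      C.dist v (Sum.inl a) ≠ C.dist v (Sum.inl b) := by
    intro a b hab
    refine ⟨f a, hfS a, ?_⟩
    have h1 : C.dist (f a) (Sum.inl a) = 1 :=
      SimpleGraph.dist_eq_one_iff_adj.mpr (corona_adj_inl_inr.mpr rfl).symm
    have h2 : C.dist (f a) (Sum.inl b) ≠ 1 := by
      apply dist_ne_one
      intro h
      rw [SimpleGraph.adj_comm, corona_adj_inl_inr] at h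
      exact hab.ne h.symm
    rw [h1]
    exact fun h => h2 h.symm
  -- Case: a center and a vertex of its copy
  have case_mixed : ∀ (a : α) (q : β), ∃ v ∈ (S : Set (α ⊕ α × β)),
      C.dist v (Sum.inl a) ≠ C.dist v (Sum.inr (a, q)) := by
    intro a q
    rcases q with i | j
    · -- a left vertex of the copy: use f a
      refine ⟨f a, hfS a, ?_⟩
      have h1 : C.dist (f a) (Sum.inl a) = 1 :=
        SimpleGraph.dist_eq_one_iff_adj.mpr (corona_adj_inl_inr.mpr rfl).symm
      have h2 : C.dist (f a) (Sum.inr (a, Sum.inl i)) ≠ 1 := by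
        by_cases hi : i = i0
        · subst hi
          rw [show (Sum.inr (a, Sum.inl i0) : α ⊕ α × β) = f a from rfl,
            SimpleGraph.dist_self]
          omega
        · apply dist_ne_one
          intro h
          rw [hf, corona_adj_inr_inr, hH] at h
          simp [hi] at h
      rw [h1]
      exact fun h => h2 h.symm
    · -- a right vertex of the copy: use f a' for a' ≠ a
      obtain ⟨a', ha'⟩ := Fintype.exists_ne_of_one_lt_card (by omega) a
      refine ⟨f a', hfS a', ?_⟩
      have hx : ∀ p : β, f a' ≠ Sum.inr (a, p) := by
        intro p h
        rw [hf] at h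
        exact ha' (by simpa using congrArg (Sum.elim id Prod.fst) h)
      have hd : C.dist (f a') (Sum.inr (a, Sum.inr j)) = C.dist (f a') (Sum.inl a) + 1 :=
        corona_dist_inr hG hx
      rw [hd]
      omega
  -- Case: two adjacent vertices in the same copy
  have case_inr : ∀ (a : α) (p q : β), H.Adj p q → ∃ v ∈ (S : Set (α ⊕ α × β)),
      C.dist v (Sum.inr (a, p)) ≠ C.dist v (Sum.inr (a, q)) := by
    have main : ∀ (a : α) (i : Fin r) (j : Fin s),
        C.dist (f a) (Sum.inr (a, Sum.inl i)) ≠ C.dist (f a) (Sum.inr (a, Sum.inr j)) := by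
      intro a i j
      have h1 : C.dist (f a) (Sum.inr (a, Sum.inr j)) = 1 := by
        apply SimpleGraph.dist_eq_one_iff_adj.mpr
        rw [hf, corona_adj_inr_inr, hH]
        exact ⟨rfl, by simp⟩
      have h2 : C.dist (f a) (Sum.inr (a, Sum.inl i)) ≠ 1 := by
        by_cases hi : i = i0
        · subst hi
          rw [show (Sum.inr (a, Sum.inl i0) : α ⊕ α × β) = f a from rfl,
            SimpleGraph.dist_self]
          omega
        · apply dist_ne_one
          intro h
          rw [hf, corona_adj_inr_inr, hH] at h
          simp [hi] at h
      rw [h1]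
      exact h2
    intro a p q hpq
    rw [hH, completeBipartiteGraph_adj] at hpq
    rcases p with i | j <;> rcases q with i' | j' <;> simp at hpq
    · exact ⟨f a, hfS a, main a i j'⟩
    · exact ⟨f a, hfS a, fun h => main a i' j h.symm⟩
  -- S is a local metric generator
  have hgen : IsLocalMetricGenerator C (S : Set (α ⊕ α × β)) := by
    rintro (a | ⟨a, p⟩) (b | ⟨b, q⟩) hadj
    · exact case_inl a b (corona_adj_inl_inl.mp hadj)
    · rw [corona_adj_inl_inr] at hadj
      subst hadj
      exact case_mixed a q
    · rw [SimpleGraph.adj_comm, corona_adj_inl_inr] at hadj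
      subst hadj
      obtain ⟨v, hv, hne⟩ := case_mixed b p
      exact ⟨v, hv, hne.symm⟩
    · rw [corona_adj_inr_inr] at hadj
      obtain ⟨rfl, hpq⟩ := hadj
      exact case_inr a p q hpq
  -- membership of n in the defining set
  have hmem : Fintype.card α ∈
      {k | ∃ T : Finset (α ⊕ α × β), T.card = k ∧ IsLocalMetricGenerator C ↑T} :=
    ⟨S, hScard, hgen⟩
  -- lower bound: every generator has at least n elements
  have hlb : ∀ k ∈ {k | ∃ T : Finset (α ⊕ α × β), T.card = k ∧ IsLocalMetricGenerator C ↑T},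
      Fintype.card α ≤ k := by
    rintro k ⟨T, rfl, hTgen⟩
    have key : ∀ a : α, ∃ v, ∃ p : β, v ∈ T ∧ v = Sum.inr (a, p) := by
      intro a
      have hadj : C.Adj (Sum.inr (a, Sum.inl i0)) (Sum.inr (a, Sum.inr j0)) := by
        rw [corona_adj_inr_inr, hH]
        exact ⟨rfl, by simp⟩
      obtain ⟨v, hv, hne⟩ := hTgen _ _ hadj
      by_cases hcopy : ∃ p : β, v = Sum.inr (a, p)
      · obtain ⟨p, hp⟩ := hcopy
        exact ⟨v, p, hv, hp⟩
      · exfalso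
        push_neg at hcopy
        have hd1 : C.dist v (Sum.inr (a, Sum.inl i0)) = C.dist v (Sum.inl a) + 1 :=
          corona_dist_inr hG hcopy
        have hd2 : C.dist v (Sum.inr (a, Sum.inr j0)) = C.dist v (Sum.inl a) + 1 :=
          corona_dist_inr hG hcopy
        exact hne (hd1.trans hd2.symm)
    choose g gp hgT hgeq using key
    have hle : (Finset.univ : Finset α).card ≤ T.card := by
      apply Finset.card_le_card_of_injOn g (fun a _ => hgT a)
      intro a _ b _ hab
      rw [hgeq a, hgeq b] at hab
      simpa using congrArg (Sum.elim id Prod.fst) hab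
    rwa [Finset.card_univ] at hle
  rw [localMetricDim]
  exact le_antisymm (Nat.sInf_le hmem) (le_csInf ⟨_, hmem⟩ hlb)
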